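/- Any BST-extension proving at least one UC-instance is deductively equivalent to an NST-fragment: if Γ is a set of L-sentences such that some UC-instance α is a semantic consequence of BST ∪ Γ, then there exists a set Δ of UC-instances such that for every L-sentence χ, χ is a semantic consequence of BST ∪ Γ if and only if χ is a semantic consequence of BST ∪ Δ. -/

import Mathlib

open FirstOrder FirstOrder.Language

namespace SetParadox

/-- The language with a single binary relation symbol `∈`. -/
def L : Language := ⟨fun _ => Empty, fun n => match n with | 2 => Unit | _ => Empty⟩

/-- The membership relation symbol. -/
def memRel : L.Relations 2 := Unit.unit

/-- `memF t₁ t₂` is the atomic formula `t₁ ∈ t₂`. -/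
def memF {n : ℕ} (t₁ t₂ : L.Term (Empty ⊕ Fin n)) : L.BoundedFormula Empty n :=
  memRel.boundedFormula₂ t₁ t₂

/-- Extensionality: `∀y∀z(∀x(x∈y ↔ x∈z) → y=z)`. -/
def extAx : L.Sentence :=
  ∀' ∀' ((∀' (memF (&2) (&0) ⇔ memF (&2) (&1))) ⟹ ((&0) =' (&1)))

/-- Basic set theory: the theory whose only axiom is extensionality. -/
def BST : L.Theory := {extAx}

/-- The UC-instance `∃y∀x(x∈y ↔ φ(x))` determined by a formula `φ` with one free
variable `x` (so that `y` does not occur free in `φ`). -/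
def UCinst (φ : L.BoundedFormula Empty 1) : L.Sentence :=
  ∃' ∀' (memF (&1) (&0) ⇔ φ.liftAt 1 0)


/-- A sentence is a UC-instance if it has the form `∃y∀x(x∈y ↔ φ(x))`
where `y` does not occur free in `φ`. -/
def IsUCInstance (σ : L.Sentence) : Prop :=
  ∃ φ : L.BoundedFormula Empty 1, σ = UCinst φ

section Aux

variable {M : Type*} [L.Structure M]

lemma realize_UCinst (φ : L.BoundedFormula Empty 1) :
    M ⊨ UCinst φ ↔ ∃ y : M, ∀ x : M,
      (Structure.RelMap memRel ![x, y] ↔ φ.Realize Empty.elim ![x]) := by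
  simp only [UCinst, Sentence.Realize, Formula.Realize, memF, BoundedFormula.realize_ex,
    BoundedFormula.realize_all, BoundedFormula.realize_iff, BoundedFormula.realize_rel₂,
    BoundedFormula.realize_liftAt (by norm_num : (0:ℕ) ≤ 1), Term.realize_var]
  refine exists_congr fun y => forall_congr' fun x => ?_
  have h1 : (Fin.snoc (Fin.snoc default y) x ∘
      fun i : Fin 1 => if (i:ℕ) < 0 then Fin.castAdd 1 i else i.addNat 1) = ![x] := by
    funext i
    fin_cases i
    simp [Fin.snoc]
  have h2 : (default : Empty → M) = Empty.elim := Subsingleton.elim _ _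
  rw [h1, h2]
  have h3 : Fin.snoc (Fin.snoc (default : Fin 0 → M) y) x = ![y, x] := by
    funext i
    fin_cases i <;> simp [Fin.snoc]
  rw [h3]
  simp [Fin.snoc]

/-- The formula coding the sentence `χ` relative to the comprehension formula `ψ`:
`(χ ∧ ψ(x)) ∨ (¬χ ∧ x ∉ x)`. -/
def Phi (ψ : L.BoundedFormula Empty 1) (χ : L.Sentence) : L.BoundedFormula Empty 1 :=
  (χ.liftAt 1 0 ⊓ ψ) ⊔ ((∼(χ.liftAt 1 0)) ⊓ (∼(memF (&0) (&0))))

lemma realize_sentence_any (χ : L.Sentence) (v : Empty → M) (xs : Fin 1 → M) :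
    (χ.liftAt 1 0).Realize v xs ↔ M ⊨ χ := by
  rw [BoundedFormula.realize_liftAt (by norm_num : (0:ℕ) ≤ 0), Sentence.Realize,
    Formula.Realize, Subsingleton.elim v default]
  exact iff_of_eq (congrArg _ (Subsingleton.elim _ _))

lemma realize_Phi (ψ : L.BoundedFormula Empty 1) (χ : L.Sentence) (x : M) :
    (Phi ψ χ).Realize Empty.elim ![x] ↔
      ((M ⊨ χ) ∧ ψ.Realize Empty.elim ![x]) ∨
        ((¬ M ⊨ χ) ∧ ¬ Structure.RelMap memRel ![x, x]) := by
  simp only [Phi, BoundedFormula.realize_sup, BoundedFormula.realize_inf,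
    BoundedFormula.realize_not, memF, BoundedFormula.realize_rel₂,
    realize_sentence_any, Term.realize_var]
  simp [Fin.snoc]

end Aux

/-- Any `BST`-extension proving at least one UC-instance is deductively equivalent to
an NST-fragment: if some UC-instance `α` is a semantic consequence of `BST ∪ Γ`, then
there is a set `Δ` of UC-instances with exactly the same semantic consequences. -/
theorem equivalent_to_NST_fragment (Γ : Set L.Sentence)
    (h : ∃ α : L.Sentence, IsUCInstance α ∧ (BST ∪ Γ) ⊨ᵇ α) :
    ∃ Δ : Set L.Sentence, (∀ σ ∈ Δ, IsUCInstance σ) ∧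
      ∀ χ : L.Sentence, ((BST ∪ Γ) ⊨ᵇ χ ↔ (BST ∪ Δ) ⊨ᵇ χ) := by
  obtain ⟨α, ⟨ψ, rfl⟩, hα⟩ := h
  refine ⟨{σ | ∃ χ : L.Sentence, (BST ∪ Γ) ⊨ᵇ χ ∧ σ = UCinst (Phi ψ χ)},
    by rintro σ ⟨χ, -, rfl⟩; exact ⟨_, rfl⟩, fun χ => ⟨fun hχ => ?_, fun hχ => ?_⟩⟩
  · -- forward: every model of BST ∪ Δ satisfies χ
    rw [Theory.models_sentence_iff]
    intro M
    have hmem : UCinst (Phi ψ χ) ∈ BST ∪ {σ | ∃ χ : L.Sentence,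
        (BST ∪ Γ) ⊨ᵇ χ ∧ σ = UCinst (Phi ψ χ)} :=
      Set.mem_union_right _ ⟨χ, hχ, rfl⟩
    have hUC : (M : Type _) ⊨ UCinst (Phi ψ χ) := Theory.realize_sentence_of_mem _ hmem
    rw [realize_UCinst] at hUC
    obtain ⟨y, hy⟩ := hUC
    by_cases hc : (M : Type _) ⊨ χ
    · exact hc
    · have := (hy y).trans (realize_Phi ψ χ y)
      simp only [hc, false_and, not_false_iff, true_and, false_or] at this
      exact absurd this (by tauto)
  · -- backward: every model of BST ∪ Γ satisfies χ
    rw [Theory.models_sentence_iff] at hχ ⊢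
    intro M
    haveI : (BST ∪ {σ | ∃ χ : L.Sentence,
        (BST ∪ Γ) ⊨ᵇ χ ∧ σ = UCinst (Phi ψ χ)}).Model (M : Type _) := by
      rw [Theory.model_iff]
      rintro φ (hφ | ⟨χ', hχ', rfl⟩)
      · exact Theory.realize_sentence_of_mem (BST ∪ Γ) (Set.mem_union_left _ hφ)
      · have hχ'M : (M : Type _) ⊨ χ' := Theory.models_sentence_iff.1 hχ' M
        have hαM : (M : Type _) ⊨ UCinst ψ := Theory.models_sentence_iff.1 hα M
        rw [realize_UCinst] at hαM ⊢
        obtain ⟨y, hy⟩ := hαM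
        refine ⟨y, fun x => (hy x).trans ?_⟩
        rw [realize_Phi]
        simp [hχ'M]
    exact hχ ⟨(M : Type _)⟩

end SetParadox
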